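/- Krein conditions for bipartite coherent configurations: Let (β, γ, X_i, Y_j, N_h) be a bipartite coherent configuration equipped with a second basis L_r, R_s, D_h as above, and let the Krein parameters λ_{ij}(h), Δ_{ij}(h), ρ_{ij}(h) be defined by L_i ∘ L_j = (1/|β|) Σ_h λ_{ij}(h) L_h, D_i ∘ D_j = (1/√(|β||γ|)) Σ_h Δ_{ij}(h) D_h, and R_i ∘ R_j = (1/|γ|) Σ_h ρ_{ij}(h) R_h. Then: (i) λ_{ij}(h) ≥ 0 for all 0 ≤ i, j, h ≤ t_β; (ii) ρ_{ij}(h) ≥ 0 for all 0 ≤ i, j, h ≤ t_γ; (iii) λ_{ij}(h) ρ_{ij}(h) ≥ Δ_{ij}(h)² for all 0 ≤ i, j, h ≤ t̃_{βγ}. -/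

import Mathlib

open Matrix

set_option linter.unusedSectionVars false

section Aux
variable {m n p : Type} [Fintype m] [Fintype n] [Fintype p]

lemma trace_mul_transpose_self_nonneg (M : Matrix m n ℝ) : 0 ≤ trace (M * Mᵀ) := by
  have : trace (M * Mᵀ) = ∑ i, ∑ j, (M i j)^2 := by
    simp [trace, mul_apply, diag, sq]
  rw [this]
  positivity

lemma eq_zero_of_trace_mul_transpose_self (M : Matrix m n ℝ) (h : trace (M * Mᵀ) = 0) :
    M = 0 := by
  have h2 : trace (M * Mᵀ) = ∑ i, ∑ j, (M i j)^2 := by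
    simp [trace, mul_apply, diag, sq]
  rw [h2] at h
  ext i j
  have h3 := (Finset.sum_eq_zero_iff_of_nonneg (by intro i _; positivity)).1 h i (Finset.mem_univ i)
  have h4 := (Finset.sum_eq_zero_iff_of_nonneg (by intro j _; positivity)).1 h3 j (Finset.mem_univ j)
  simpa using pow_eq_zero_iff (n := 2) (by norm_num) |>.1 h4

lemma trace_mul_transpose_self_pos (M : Matrix m n ℝ) (h : M ≠ 0) : 0 < trace (M * Mᵀ) := by
  rcases (trace_mul_transpose_self_nonneg M).eq_or_lt with h0 | h0
  · exact absurd (eq_zero_of_trace_mul_transpose_self M h0.symm) h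
  · exact h0

lemma sos_trace_nonneg (G H K : Matrix m n ℝ) :
    0 ≤ trace ((Matrix.hadamard (G * Gᵀ) (H * Hᵀ)) * (K * Kᵀ)) := by
  have key : trace ((Matrix.hadamard (G * Gᵀ) (H * Hᵀ)) * (K * Kᵀ))
      = ∑ x : n × n × n, (∑ u : m, G u x.1 * H u x.2.1 * K u x.2.2)^2 := by
    have expand : ∀ u v : m, Matrix.hadamard (G * Gᵀ) (H * Hᵀ) u v * (K * Kᵀ) v u
        = ∑ x : n × n × n, (G u x.1 * H u x.2.1 * K u x.2.2) *
            (G v x.1 * H v x.2.1 * K v x.2.2) := by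
      intro u v
      simp only [hadamard_apply, mul_apply, transpose_apply, Fintype.sum_prod_type]
      rw [Finset.sum_mul_sum, Finset.sum_mul]
      refine Finset.sum_congr rfl fun pq _ => ?_
      rw [Finset.sum_mul]
      refine Finset.sum_congr rfl fun q _ => ?_
      rw [Finset.mul_sum]
      exact Finset.sum_congr rfl fun r _ => by ring
    have h1 : trace ((Matrix.hadamard (G * Gᵀ) (H * Hᵀ)) * (K * Kᵀ))
        = ∑ u : m, ∑ v : m, ∑ x : n × n × n,
            (G u x.1 * H u x.2.1 * K u x.2.2) * (G v x.1 * H v x.2.1 * K v x.2.2) := by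
      simp only [trace, diag_apply, mul_apply]
      exact Finset.sum_congr rfl fun u _ => Finset.sum_congr rfl fun v _ => expand u v
    rw [h1]
    calc ∑ u : m, ∑ v : m, ∑ x : n × n × n,
            (G u x.1 * H u x.2.1 * K u x.2.2) * (G v x.1 * H v x.2.1 * K v x.2.2)
        = ∑ u : m, ∑ x : n × n × n, ∑ v : m,
            (G u x.1 * H u x.2.1 * K u x.2.2) * (G v x.1 * H v x.2.1 * K v x.2.2) :=
          Finset.sum_congr rfl fun u _ => Finset.sum_comm
      _ = ∑ x : n × n × n, ∑ u : m, ∑ v : m,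
            (G u x.1 * H u x.2.1 * K u x.2.2) * (G v x.1 * H v x.2.1 * K v x.2.2) :=
          Finset.sum_comm
      _ = ∑ x : n × n × n, (∑ u : m, G u x.1 * H u x.2.1 * K u x.2.2)^2 :=
          Finset.sum_congr rfl fun x _ => by rw [sq, Finset.sum_mul_sum]
  rw [key]; positivity
end Aux


section Blocks
variable {m n p q : Type} [Fintype m] [Fintype n] [Fintype p] [Fintype q]

lemma hadamard_fromBlocks (A A' : Matrix m p ℝ) (B B' : Matrix m q ℝ)
    (C C' : Matrix n p ℝ) (D D' : Matrix n q ℝ) :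
    Matrix.hadamard (fromBlocks A B C D) (fromBlocks A' B' C' D') =
      fromBlocks (Matrix.hadamard A A') (Matrix.hadamard B B')
        (Matrix.hadamard C C') (Matrix.hadamard D D') := by
  ext i j
  cases i <;> cases j <;> simp [hadamard_apply, fromBlocks]

lemma trace_fromBlocks' (A : Matrix m m ℝ) (B : Matrix m n ℝ)
    (C : Matrix n m ℝ) (D : Matrix n n ℝ) :
    trace (fromBlocks A B C D) = trace A + trace D := by
  simp [trace, Fintype.sum_sum_type, fromBlocks, diag]

lemma hadamard_transpose' (A B : Matrix m n ℝ) :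
    Matrix.hadamard Aᵀ Bᵀ = (Matrix.hadamard A B)ᵀ := by
  ext i j; simp [hadamard_apply]
end Blocks




section Count
variable {β γ : Type} [Fintype β] [DecidableEq β] [Fintype γ] [DecidableEq γ]

lemma card_bound (tb tbg : ℕ) (L : ℕ → Matrix β β ℝ) (D : ℕ → Matrix β γ ℝ)
    (S : Submodule ℝ (Matrix β γ ℝ))
    (hD : ∀ r, r < tbg → D r ∈ S)
    (hLS : ∀ r, r ≤ tb → ∀ A ∈ S, L r * A ∈ S)
    (hcomm : ∀ A ∈ S, ∀ B ∈ S, A * Bᵀ = B * Aᵀ)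
    (hcomm' : ∀ A ∈ S, ∀ B ∈ S, Aᵀ * B = Bᵀ * A)
    (hABt : ∀ A ∈ S, ∀ B ∈ S, ∃ c : ℕ → ℝ,
      A * Bᵀ = ∑ s ∈ Finset.range (tb + 1), c s • L s)
    (hLL : ∀ r, r ≤ tb → ∀ s, s ≤ tb → L r * L s = if r = s then L r else 0)
    (hLsym : ∀ r, r ≤ tb → (L r)ᵀ = L r)
    (hLsum : ∑ r ∈ Finset.range (tb + 1), L r = 1)
    (hDind : LinearIndependent ℝ (fun r : Fin tbg => D r.val)) :
    tbg ≤ tb + 1 := by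
  classical
  -- L r is idempotent
  have hLidem : ∀ r, r ≤ tb → L r * L r = L r := fun r hr => by
    rw [hLL r hr r hr, if_pos rfl]
  -- if A, B are in the r-eigenspace, then A * Bᵀ is a multiple of L r
  have keyc : ∀ r, r ≤ tb → ∀ A ∈ S, ∀ B ∈ S, L r * A = A → L r * B = B →
      ∃ c : ℝ, A * Bᵀ = c • L r := by
    intro r hr A hA B hB hLA hLB
    obtain ⟨co, hco⟩ := hABt A hA B hB
    refine ⟨co r, ?_⟩
    have h1 : A * Bᵀ = L r * (A * Bᵀ) * L r := by
      conv_lhs => rw [← hLA, ← hLB]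
      rw [transpose_mul, hLsym r hr]
      simp only [Matrix.mul_assoc]
    rw [h1, hco, Finset.mul_sum, Finset.sum_mul]
    rw [Finset.sum_eq_single r]
    · rw [mul_smul_comm, smul_mul_assoc, hLL r hr r hr, if_pos rfl, hLidem r hr]
    · intro s hs hne
      have hs' : s ≤ tb := Nat.lt_succ_iff.mp (Finset.mem_range.mp hs)
      rw [mul_smul_comm, smul_mul_assoc, hLL r hr s hs', if_neg (Ne.symm hne), zero_mul,
        smul_zero]
    · intro h; exact absurd (Finset.mem_range.mpr (Nat.lt_succ_of_le hr)) h
  -- any two elements of the r-eigenspace are linearly dependent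
  have dep : ∀ r, r ≤ tb → ∀ A ∈ S, ∀ B ∈ S, L r * A = A → L r * B = B → A ≠ 0 →
      ∃ t : ℝ, B = t • A := by
    intro r hr A hA B hB hLA hLB hA0
    obtain ⟨a, ha⟩ := keyc r hr A hA A hA hLA hLA
    obtain ⟨c, hc⟩ := keyc r hr A hA B hB hLA hLB
    have ha0 : a ≠ 0 := by
      intro h
      rw [h, zero_smul] at ha
      exact hA0 (eq_zero_of_trace_mul_transpose_self A (by rw [ha, trace_zero]))
    refine ⟨c / a, ?_⟩
    set B' : Matrix β γ ℝ := B - (c / a) • A with hB'def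
    have hB'S : B' ∈ S := sub_mem hB (Submodule.smul_mem S _ hA)
    have hLB' : L r * B' = B' := by
      rw [hB'def, Matrix.mul_sub, Matrix.mul_smul, hLA, hLB]
    have hAB' : A * B'ᵀ = 0 := by
      rw [hB'def, transpose_sub, transpose_smul, Matrix.mul_sub, Matrix.mul_smul, ha, hc,
        smul_smul, div_mul_cancel₀ c ha0, sub_self]
    set M : Matrix γ γ ℝ := Aᵀ * B' with hMdef
    have hMsym : Mᵀ = M := by
      rw [hMdef, transpose_mul, transpose_transpose]
      exact hcomm' B' hB'S A hA
    have hMsq : M * M = 0 := by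
      have hBA : B' * Aᵀ = A * B'ᵀ := (hcomm A hA B' hB'S).symm
      calc M * M = Aᵀ * (B' * Aᵀ) * B' := by rw [hMdef]; simp only [Matrix.mul_assoc]
        _ = Aᵀ * (A * B'ᵀ) * B' := by rw [hBA]
        _ = 0 := by rw [hAB', Matrix.mul_zero, Matrix.zero_mul]
    have hM0 : M = 0 := by
      apply eq_zero_of_trace_mul_transpose_self
      rw [hMsym, hMsq]
      exact trace_zero _ _
    have hAAB' : a • B' = 0 := by
      have hAM : A * M = 0 := by rw [hM0, Matrix.mul_zero]
      have h2 : A * Aᵀ * B' = 0 := by rw [Matrix.mul_assoc, ← hMdef, hAM]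
      rw [ha, Matrix.smul_mul, hLB'] at h2
      exact h2
    have hB'0 : B' = 0 := by
      rcases smul_eq_zero.mp hAAB' with h | h
      · exact absurd h ha0
      · exact h
    exact sub_eq_zero.mp hB'0
  -- choose a representative of each eigenspace
  let w : ℕ → Matrix β γ ℝ := fun r =>
    if h : ∃ s, s < tbg ∧ L r * D s ≠ 0 then L r * D h.choose else 0
  have hw : ∀ r, r ≤ tb → ∀ s, s < tbg →
      L r * D s ∈ Submodule.span ℝ (Set.range (fun r : Fin (tb + 1) => w r.val)) := by
    intro r hr s hs
    by_cases h0 : L r * D s = 0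
    · rw [h0]; exact Submodule.zero_mem _
    · have hex : ∃ s, s < tbg ∧ L r * D s ≠ 0 := ⟨s, hs, h0⟩
      have hwr : w r = L r * D hex.choose := by
        simp only [w, dif_pos hex]
      obtain ⟨hs0, hne0⟩ := hex.choose_spec
      have hwS : L r * D hex.choose ∈ S := hLS r hr _ (hD _ hs0)
      have hLw : L r * (L r * D hex.choose) = L r * D hex.choose := by
        rw [← Matrix.mul_assoc, hLidem r hr]
      have hLs : L r * (L r * D s) = L r * D s := by
        rw [← Matrix.mul_assoc, hLidem r hr]
      obtain ⟨t, ht⟩ := dep r hr _ hwS _ (hLS r hr _ (hD _ hs)) hLw hLs hne0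
      rw [ht, ← hwr]
      have hrmem : w r ∈ Set.range (fun r : Fin (tb + 1) => w r.val) :=
        ⟨⟨r, Nat.lt_succ_of_le hr⟩, rfl⟩
      exact Submodule.smul_mem _ t (Submodule.subset_span hrmem)
  have hDmem : ∀ s, s < tbg →
      D s ∈ Submodule.span ℝ (Set.range (fun r : Fin (tb + 1) => w r.val)) := by
    intro s hs
    have : D s = ∑ r ∈ Finset.range (tb + 1), L r * D s := by
      rw [← Matrix.sum_mul, hLsum, Matrix.one_mul]
    rw [this]
    apply Submodule.sum_mem
    intro r hrm
    exact hw r (Nat.lt_succ_iff.mp (Finset.mem_range.mp hrm)) s hs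
  -- conclude by a dimension count
  set P := Submodule.span ℝ (Set.range (fun r : Fin (tb + 1) => w r.val)) with hP
  have hind : LinearIndependent ℝ (fun i : Fin tbg => (⟨D i.val, hDmem i.val i.isLt⟩ : P)) := by
    apply LinearIndependent.of_comp P.subtype
    exact hDind
  have h1 : tbg ≤ Module.finrank ℝ P := by
    simpa using hind.fintype_card_le_finrank
  have h2 : Module.finrank ℝ P ≤ tb + 1 := by
    have := finrank_range_le_card (R := ℝ) (fun r : Fin (tb + 1) => w r.val)
    rw [Fintype.card_fin] at this
    exact this
  omega
end Count

/-- A bipartite coherent configuration on point set `β` and block set `γ`, with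
Schur idempotents `X 0, …, X tb` (on `β`), `Y 0, …, Y tg` (on `γ`) and
`N 1, …, N tbg` (from `β` to `γ`), satisfying (C1)–(C6). -/
structure BipartiteCC (β γ : Type) [Fintype β] [DecidableEq β] [Fintype γ] [DecidableEq γ] where
  tb : ℕ
  tg : ℕ
  tbg : ℕ
  tb_pos : 1 ≤ tb
  tg_pos : 1 ≤ tg
  tbg_pos : 1 ≤ tbg
  X : ℕ → Matrix β β ℝ
  Y : ℕ → Matrix γ γ ℝ
  N : ℕ → Matrix β γ ℝ
  X_zero_one : ∀ i, i ≤ tb → ∀ u v, X i u v = 0 ∨ X i u v = 1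
  Y_zero_one : ∀ j, j ≤ tg → ∀ u v, Y j u v = 0 ∨ Y j u v = 1
  N_zero_one : ∀ h, 1 ≤ h → h ≤ tbg → ∀ u v, N h u v = 0 ∨ N h u v = 1
  X_ne_zero : ∀ i, i ≤ tb → X i ≠ 0
  Y_ne_zero : ∀ j, j ≤ tg → Y j ≠ 0
  N_ne_zero : ∀ h, 1 ≤ h → h ≤ tbg → N h ≠ 0
  /-- (C1) -/
  X_zero : X 0 = 1
  /-- (C1) -/
  Y_zero : Y 0 = 1
  /-- (C2), `ββ` block -/
  X_sum : ∑ i ∈ Finset.range (tb + 1), X i = Matrix.of fun _ _ => (1 : ℝ)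
  /-- (C2), `γγ` block -/
  Y_sum : ∑ j ∈ Finset.range (tg + 1), Y j = Matrix.of fun _ _ => (1 : ℝ)
  /-- (C2), `βγ` block -/
  N_sum : ∑ h ∈ Finset.Icc 1 tbg, N h = Matrix.of fun _ _ => (1 : ℝ)
  /-- (C3) -/
  X_transpose : ∀ i, i ≤ tb → ∃ i', i' ≤ tb ∧ (X i)ᵀ = X i'
  /-- (C3) -/
  Y_transpose : ∀ j, j ≤ tg → ∃ j', j' ≤ tg ∧ (Y j)ᵀ = Y j'
  /-- (C4) -/
  X_mul_X : ∀ i, i ≤ tb → ∀ j, j ≤ tb →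
      X i * X j ∈ Submodule.span ℝ {M | ∃ i', i' ≤ tb ∧ M = X i'}
  /-- (C4) -/
  Y_mul_Y : ∀ i, i ≤ tg → ∀ j, j ≤ tg →
      Y i * Y j ∈ Submodule.span ℝ {M | ∃ j', j' ≤ tg ∧ M = Y j'}
  /-- (C4) -/
  X_mul_N : ∀ i, i ≤ tb → ∀ h, 1 ≤ h → h ≤ tbg →
      X i * N h ∈ Submodule.span ℝ {M | ∃ h', 1 ≤ h' ∧ h' ≤ tbg ∧ M = N h'}
  /-- (C4) -/
  N_mul_Y : ∀ h, 1 ≤ h → h ≤ tbg → ∀ j, j ≤ tg →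
      N h * Y j ∈ Submodule.span ℝ {M | ∃ h', 1 ≤ h' ∧ h' ≤ tbg ∧ M = N h'}
  /-- (C4) -/
  N_mul_Nt : ∀ h, 1 ≤ h → h ≤ tbg → ∀ h', 1 ≤ h' → h' ≤ tbg →
      N h * (N h')ᵀ ∈ Submodule.span ℝ {M | ∃ i, i ≤ tb ∧ M = X i}
  /-- (C4) -/
  Nt_mul_N : ∀ h, 1 ≤ h → h ≤ tbg → ∀ h', 1 ≤ h' → h' ≤ tbg →
      (N h)ᵀ * N h' ∈ Submodule.span ℝ {M | ∃ j, j ≤ tg ∧ M = Y j}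
  /-- (C5) -/
  N_comm : ∀ i, 1 ≤ i → i ≤ tbg → ∀ j, 1 ≤ j → j ≤ tbg → N i * (N j)ᵀ = N j * (N i)ᵀ
  /-- (C5) -/
  Nt_comm : ∀ i, 1 ≤ i → i ≤ tbg → ∀ j, 1 ≤ j → j ≤ tbg → (N i)ᵀ * N j = (N j)ᵀ * N i
  /-- (C6) -/
  X_span : Submodule.span ℝ {M | ∃ i, i ≤ tb ∧ M = X i} =
      Submodule.span ℝ
        (insert 1 {M | ∃ i, 1 ≤ i ∧ i ≤ tbg ∧ ∃ j, 1 ≤ j ∧ j ≤ tbg ∧ M = N i * (N j)ᵀ})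
  /-- (C6) -/
  Y_span : Submodule.span ℝ {M | ∃ j, j ≤ tg ∧ M = Y j} =
      Submodule.span ℝ
        (insert 1 {M | ∃ i, 1 ≤ i ∧ i ≤ tbg ∧ ∃ j, 1 ≤ j ∧ j ≤ tbg ∧ M = (N i)ᵀ * N j})

/-- A second (spectral) basis `L 0, …, L tb`, `R 0, …, R tg`, `D 0, …, D (tbg - 1)` for a
bipartite coherent configuration, satisfying (D1)–(D4). -/
structure SecondBasis {β γ : Type} [Fintype β] [DecidableEq β] [Fintype γ] [DecidableEq γ]
    (cc : BipartiteCC β γ) where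
  L : ℕ → Matrix β β ℝ
  R : ℕ → Matrix γ γ ℝ
  D : ℕ → Matrix β γ ℝ
  /-- the `L`'s are linearly independent -/
  L_indep : LinearIndependent ℝ (fun r : Fin (cc.tb + 1) => L r.val)
  /-- the `R`'s are linearly independent -/
  R_indep : LinearIndependent ℝ (fun r : Fin (cc.tg + 1) => R r.val)
  /-- the `D`'s are linearly independent -/
  D_indep : LinearIndependent ℝ (fun r : Fin cc.tbg => D r.val)
  /-- the `L`'s span the same space as the `X`'s -/
  L_span : Submodule.span ℝ {M | ∃ r, r ≤ cc.tb ∧ M = L r} =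
      Submodule.span ℝ {M | ∃ i, i ≤ cc.tb ∧ M = cc.X i}
  /-- the `R`'s span the same space as the `Y`'s -/
  R_span : Submodule.span ℝ {M | ∃ r, r ≤ cc.tg ∧ M = R r} =
      Submodule.span ℝ {M | ∃ j, j ≤ cc.tg ∧ M = cc.Y j}
  /-- the `D`'s span the same space as the `N`'s -/
  D_span : Submodule.span ℝ {M | ∃ r, r ≤ cc.tbg - 1 ∧ M = D r} =
      Submodule.span ℝ {M | ∃ h, 1 ≤ h ∧ h ≤ cc.tbg ∧ M = cc.N h}
  /-- (D1) -/
  L_mul_L : ∀ r, r ≤ cc.tb → ∀ s, s ≤ cc.tb → L r * L s = if r = s then L r else 0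
  /-- (D1) -/
  R_mul_R : ∀ r, r ≤ cc.tg → ∀ s, s ≤ cc.tg → R r * R s = if r = s then R r else 0
  /-- (D2) -/
  L_zero : L 0 = ((Fintype.card β : ℝ))⁻¹ • Matrix.of fun _ _ => (1 : ℝ)
  /-- (D2) -/
  D_zero : D 0 = (Real.sqrt ((Fintype.card β : ℝ) * (Fintype.card γ : ℝ)))⁻¹ •
      Matrix.of fun _ _ => (1 : ℝ)
  /-- (D2) -/
  R_zero : R 0 = ((Fintype.card γ : ℝ))⁻¹ • Matrix.of fun _ _ => (1 : ℝ)
  /-- (D3) -/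
  L_sum : ∑ r ∈ Finset.range (cc.tb + 1), L r = 1
  /-- (D3) -/
  R_sum : ∑ r ∈ Finset.range (cc.tg + 1), R r = 1
  /-- (D4) -/
  L_eq_DDt : ∀ r, r ≤ cc.tbg - 1 → L r = D r * (D r)ᵀ
  /-- (D4) -/
  R_eq_DtD : ∀ r, r ≤ cc.tbg - 1 → R r = (D r)ᵀ * D r

section Config
variable {β γ : Type} [Fintype β] [DecidableEq β] [Fintype γ] [DecidableEq γ]

lemma symm_of_mem_span {n : Type} (s : Set (Matrix n n ℝ)) (hs : ∀ M ∈ s, Mᵀ = M)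
    {M : Matrix n n ℝ} (hM : M ∈ Submodule.span ℝ s) : Mᵀ = M := by
  induction hM using Submodule.span_induction with
  | mem x hx => exact hs x hx
  | zero => simp
  | add x y _ _ hx hy => rw [transpose_add, hx, hy]
  | smul a x _ hx => rw [transpose_smul, hx]

variable (cc : BipartiteCC β γ) (sb : SecondBasis cc)

lemma spanX_symm : ∀ M ∈ Submodule.span ℝ {M | ∃ i, i ≤ cc.tb ∧ M = cc.X i}, Mᵀ = M := by
  intro M hM
  rw [cc.X_span] at hM
  refine symm_of_mem_span _ ?_ hM
  rintro M hm
  rcases Set.mem_insert_iff.mp hm with rfl | ⟨i, hi1, hi2, j, hj1, hj2, rfl⟩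
  · exact transpose_one
  · rw [transpose_mul, transpose_transpose]
    exact (cc.N_comm i hi1 hi2 j hj1 hj2).symm ▸ (cc.N_comm j hj1 hj2 i hi1 hi2)

lemma spanY_symm : ∀ M ∈ Submodule.span ℝ {M | ∃ j, j ≤ cc.tg ∧ M = cc.Y j}, Mᵀ = M := by
  intro M hM
  rw [cc.Y_span] at hM
  refine symm_of_mem_span _ ?_ hM
  rintro M hm
  rcases Set.mem_insert_iff.mp hm with rfl | ⟨i, hi1, hi2, j, hj1, hj2, rfl⟩
  · exact transpose_one
  · rw [transpose_mul, transpose_transpose]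
    exact cc.Nt_comm j hj1 hj2 i hi1 hi2

lemma L_mem_spanX (r : ℕ) (hr : r ≤ cc.tb) :
    sb.L r ∈ Submodule.span ℝ {M | ∃ i, i ≤ cc.tb ∧ M = cc.X i} := by
  rw [← sb.L_span]
  exact Submodule.subset_span ⟨r, hr, rfl⟩

lemma R_mem_spanY (r : ℕ) (hr : r ≤ cc.tg) :
    sb.R r ∈ Submodule.span ℝ {M | ∃ j, j ≤ cc.tg ∧ M = cc.Y j} := by
  rw [← sb.R_span]
  exact Submodule.subset_span ⟨r, hr, rfl⟩

lemma L_symm (r : ℕ) (hr : r ≤ cc.tb) : (sb.L r)ᵀ = sb.L r :=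
  spanX_symm cc _ (L_mem_spanX cc sb r hr)

lemma R_symm (r : ℕ) (hr : r ≤ cc.tg) : (sb.R r)ᵀ = sb.R r :=
  spanY_symm cc _ (R_mem_spanY cc sb r hr)

lemma D_mem_spanN (r : ℕ) (hr : r ≤ cc.tbg - 1) :
    sb.D r ∈ Submodule.span ℝ {M | ∃ h, 1 ≤ h ∧ h ≤ cc.tbg ∧ M = cc.N h} := by
  rw [← sb.D_span]
  exact Submodule.subset_span ⟨r, hr, rfl⟩

lemma spanN_comm : ∀ A ∈ Submodule.span ℝ {M | ∃ h, 1 ≤ h ∧ h ≤ cc.tbg ∧ M = cc.N h},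
    ∀ B ∈ Submodule.span ℝ {M | ∃ h, 1 ≤ h ∧ h ≤ cc.tbg ∧ M = cc.N h},
    A * Bᵀ = B * Aᵀ := by
  intro A hA B hB
  induction hA, hB using Submodule.span_induction₂ with
  | mem_mem x y hx hy =>
    obtain ⟨i, hi1, hi2, rfl⟩ := hx
    obtain ⟨j, hj1, hj2, rfl⟩ := hy
    exact cc.N_comm i hi1 hi2 j hj1 hj2
  | zero_left y hy => simp
  | zero_right x hx => simp
  | add_left x y z _ _ _ h1 h2 => rw [Matrix.add_mul, transpose_add, Matrix.mul_add, h1, h2]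
  | add_right x y z _ _ _ h1 h2 => rw [transpose_add, Matrix.mul_add, Matrix.add_mul, h1, h2]
  | smul_left r x y _ _ h => rw [Matrix.smul_mul, transpose_smul, Matrix.mul_smul, h]
  | smul_right r x y _ _ h => rw [transpose_smul, Matrix.mul_smul, Matrix.smul_mul, h]

lemma spanN_comm' : ∀ A ∈ Submodule.span ℝ {M | ∃ h, 1 ≤ h ∧ h ≤ cc.tbg ∧ M = cc.N h},
    ∀ B ∈ Submodule.span ℝ {M | ∃ h, 1 ≤ h ∧ h ≤ cc.tbg ∧ M = cc.N h},
    Aᵀ * B = Bᵀ * A := by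
  intro A hA B hB
  induction hA, hB using Submodule.span_induction₂ with
  | mem_mem x y hx hy =>
    obtain ⟨i, hi1, hi2, rfl⟩ := hx
    obtain ⟨j, hj1, hj2, rfl⟩ := hy
    exact cc.Nt_comm i hi1 hi2 j hj1 hj2
  | zero_left y hy => simp
  | zero_right x hx => simp
  | add_left x y z _ _ _ h1 h2 => rw [transpose_add, Matrix.add_mul, Matrix.mul_add, h1, h2]
  | add_right x y z _ _ _ h1 h2 => rw [Matrix.mul_add, transpose_add, Matrix.add_mul, h1, h2]
  | smul_left r x y _ _ h => rw [transpose_smul, Matrix.smul_mul, Matrix.mul_smul, h]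
  | smul_right r x y _ _ h => rw [Matrix.mul_smul, transpose_smul, Matrix.smul_mul, h]

lemma spanN_mul_t_mem_spanX :
    ∀ A ∈ Submodule.span ℝ {M | ∃ h, 1 ≤ h ∧ h ≤ cc.tbg ∧ M = cc.N h},
    ∀ B ∈ Submodule.span ℝ {M | ∃ h, 1 ≤ h ∧ h ≤ cc.tbg ∧ M = cc.N h},
    A * Bᵀ ∈ Submodule.span ℝ {M | ∃ i, i ≤ cc.tb ∧ M = cc.X i} := by
  intro A hA B hB
  induction hA, hB using Submodule.span_induction₂ with
  | mem_mem x y hx hy =>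
    obtain ⟨i, hi1, hi2, rfl⟩ := hx
    obtain ⟨j, hj1, hj2, rfl⟩ := hy
    rw [cc.X_span]
    exact Submodule.subset_span (Set.mem_insert_iff.mpr (Or.inr ⟨i, hi1, hi2, j, hj1, hj2, rfl⟩))
  | zero_left y hy => simp
  | zero_right x hx => simp
  | add_left x y z _ _ _ h1 h2 =>
    rw [Matrix.add_mul]; exact Submodule.add_mem _ h1 h2
  | add_right x y z _ _ _ h1 h2 =>
    rw [transpose_add, Matrix.mul_add]; exact Submodule.add_mem _ h1 h2
  | smul_left r x y _ _ h =>
    rw [Matrix.smul_mul]; exact Submodule.smul_mem _ r h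
  | smul_right r x y _ _ h =>
    rw [transpose_smul, Matrix.mul_smul]; exact Submodule.smul_mem _ r h

lemma spanN_t_mul_mem_spanY :
    ∀ A ∈ Submodule.span ℝ {M | ∃ h, 1 ≤ h ∧ h ≤ cc.tbg ∧ M = cc.N h},
    ∀ B ∈ Submodule.span ℝ {M | ∃ h, 1 ≤ h ∧ h ≤ cc.tbg ∧ M = cc.N h},
    Aᵀ * B ∈ Submodule.span ℝ {M | ∃ j, j ≤ cc.tg ∧ M = cc.Y j} := by
  intro A hA B hB
  induction hA, hB using Submodule.span_induction₂ with
  | mem_mem x y hx hy =>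
    obtain ⟨i, hi1, hi2, rfl⟩ := hx
    obtain ⟨j, hj1, hj2, rfl⟩ := hy
    rw [cc.Y_span]
    exact Submodule.subset_span (Set.mem_insert_iff.mpr (Or.inr ⟨i, hi1, hi2, j, hj1, hj2, rfl⟩))
  | zero_left y hy => simp
  | zero_right x hx => simp
  | add_left x y z _ _ _ h1 h2 =>
    rw [transpose_add, Matrix.add_mul]; exact Submodule.add_mem _ h1 h2
  | add_right x y z _ _ _ h1 h2 =>
    rw [Matrix.mul_add]; exact Submodule.add_mem _ h1 h2
  | smul_left r x y _ _ h =>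
    rw [transpose_smul, Matrix.smul_mul]; exact Submodule.smul_mem _ r h
  | smul_right r x y _ _ h =>
    rw [Matrix.mul_smul]; exact Submodule.smul_mem _ r h

lemma spanX_mul_spanN :
    ∀ M ∈ Submodule.span ℝ {M | ∃ i, i ≤ cc.tb ∧ M = cc.X i},
    ∀ A ∈ Submodule.span ℝ {M | ∃ h, 1 ≤ h ∧ h ≤ cc.tbg ∧ M = cc.N h},
    M * A ∈ Submodule.span ℝ {M | ∃ h, 1 ≤ h ∧ h ≤ cc.tbg ∧ M = cc.N h} := by
  intro M hM
  induction hM using Submodule.span_induction with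
  | mem x hx =>
    obtain ⟨i, hi, rfl⟩ := hx
    intro A hA
    induction hA using Submodule.span_induction with
    | mem y hy =>
      obtain ⟨j, hj1, hj2, rfl⟩ := hy
      exact cc.X_mul_N i hi j hj1 hj2
    | zero => simp
    | add y z _ _ hy hz => rw [Matrix.mul_add]; exact Submodule.add_mem _ hy hz
    | smul a y _ hy => rw [Matrix.mul_smul]; exact Submodule.smul_mem _ a hy
  | zero => intro A hA; simp
  | add x y _ _ hx hy =>
    intro A hA
    rw [Matrix.add_mul]; exact Submodule.add_mem _ (hx A hA) (hy A hA)
  | smul a x _ hx =>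
    intro A hA
    rw [Matrix.smul_mul]; exact Submodule.smul_mem _ a (hx A hA)

lemma spanN_mul_spanY :
    ∀ A ∈ Submodule.span ℝ {M | ∃ h, 1 ≤ h ∧ h ≤ cc.tbg ∧ M = cc.N h},
    ∀ M ∈ Submodule.span ℝ {M | ∃ j, j ≤ cc.tg ∧ M = cc.Y j},
    A * M ∈ Submodule.span ℝ {M | ∃ h, 1 ≤ h ∧ h ≤ cc.tbg ∧ M = cc.N h} := by
  intro A hA
  induction hA using Submodule.span_induction with
  | mem x hx =>
    obtain ⟨i, hi1, hi2, rfl⟩ := hx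
    intro M hM
    induction hM using Submodule.span_induction with
    | mem y hy =>
      obtain ⟨j, hj, rfl⟩ := hy
      exact cc.N_mul_Y i hi1 hi2 j hj
    | zero => simp
    | add y z _ _ hy hz => rw [Matrix.mul_add]; exact Submodule.add_mem _ hy hz
    | smul a y _ hy => rw [Matrix.mul_smul]; exact Submodule.smul_mem _ a hy
  | zero => intro M hM; simp
  | add x y _ _ hx hy =>
    intro M hM
    rw [Matrix.add_mul]; exact Submodule.add_mem _ (hx M hM) (hy M hM)
  | smul a x _ hx =>
    intro M hM
    rw [Matrix.smul_mul]; exact Submodule.smul_mem _ a (hx M hM)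

lemma mem_spanNT_of :
    ∀ A ∈ Submodule.span ℝ {M | ∃ h, 1 ≤ h ∧ h ≤ cc.tbg ∧ M = cc.N h},
    Aᵀ ∈ Submodule.span ℝ {M | ∃ h, 1 ≤ h ∧ h ≤ cc.tbg ∧ M = (cc.N h)ᵀ} := by
  intro A hA
  induction hA using Submodule.span_induction with
  | mem x hx =>
    obtain ⟨i, hi1, hi2, rfl⟩ := hx
    exact Submodule.subset_span ⟨i, hi1, hi2, rfl⟩
  | zero => simp
  | add x y _ _ hx hy => rw [transpose_add]; exact Submodule.add_mem _ hx hy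
  | smul a x _ hx => rw [transpose_smul]; exact Submodule.smul_mem _ a hx

lemma mem_spanN_of :
    ∀ A ∈ Submodule.span ℝ {M | ∃ h, 1 ≤ h ∧ h ≤ cc.tbg ∧ M = (cc.N h)ᵀ},
    Aᵀ ∈ Submodule.span ℝ {M | ∃ h, 1 ≤ h ∧ h ≤ cc.tbg ∧ M = cc.N h} := by
  intro A hA
  induction hA using Submodule.span_induction with
  | mem x hx =>
    obtain ⟨i, hi1, hi2, rfl⟩ := hx
    rw [transpose_transpose]
    exact Submodule.subset_span ⟨i, hi1, hi2, rfl⟩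
  | zero => simp
  | add x y _ _ hx hy => rw [transpose_add]; exact Submodule.add_mem _ hx hy
  | smul a x _ hx => rw [transpose_smul]; exact Submodule.smul_mem _ a hx

end Config

section Config2
variable {β γ : Type} [Fintype β] [DecidableEq β] [Fintype γ] [DecidableEq γ]
variable (cc : BipartiteCC β γ) (sb : SecondBasis cc)

lemma mem_span_L {A : Matrix β β ℝ}
    (hA : A ∈ Submodule.span ℝ {M | ∃ i, i ≤ cc.tb ∧ M = cc.X i}) :
    ∃ c : ℕ → ℝ, A = ∑ s ∈ Finset.range (cc.tb + 1), c s • sb.L s := by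
  rw [← sb.L_span] at hA
  have hset : {M | ∃ r, r ≤ cc.tb ∧ M = sb.L r} =
      Set.range (fun r : Fin (cc.tb + 1) => sb.L r.val) := by
    ext M
    constructor
    · rintro ⟨r, hr, rfl⟩; exact ⟨⟨r, Nat.lt_succ_of_le hr⟩, rfl⟩
    · rintro ⟨r, rfl⟩; exact ⟨r.val, Nat.lt_succ_iff.mp r.isLt, rfl⟩
  rw [hset, Submodule.mem_span_range_iff_exists_fun] at hA
  obtain ⟨c, hc⟩ := hA
  refine ⟨fun n => if h : n < cc.tb + 1 then c ⟨n, h⟩ else 0, ?_⟩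
  rw [← hc, ← Fin.sum_univ_eq_sum_range
    (fun k => (if h : k < cc.tb + 1 then c ⟨k, h⟩ else 0) • sb.L k) (cc.tb + 1)]
  exact (Finset.sum_congr rfl fun i _ => by rw [dif_pos i.isLt]).symm

lemma mem_span_R {A : Matrix γ γ ℝ}
    (hA : A ∈ Submodule.span ℝ {M | ∃ j, j ≤ cc.tg ∧ M = cc.Y j}) :
    ∃ c : ℕ → ℝ, A = ∑ s ∈ Finset.range (cc.tg + 1), c s • sb.R s := by
  rw [← sb.R_span] at hA
  have hset : {M | ∃ r, r ≤ cc.tg ∧ M = sb.R r} =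
      Set.range (fun r : Fin (cc.tg + 1) => sb.R r.val) := by
    ext M
    constructor
    · rintro ⟨r, hr, rfl⟩; exact ⟨⟨r, Nat.lt_succ_of_le hr⟩, rfl⟩
    · rintro ⟨r, rfl⟩; exact ⟨r.val, Nat.lt_succ_iff.mp r.isLt, rfl⟩
  rw [hset, Submodule.mem_span_range_iff_exists_fun] at hA
  obtain ⟨c, hc⟩ := hA
  refine ⟨fun n => if h : n < cc.tg + 1 then c ⟨n, h⟩ else 0, ?_⟩
  rw [← hc, ← Fin.sum_univ_eq_sum_range
    (fun k => (if h : k < cc.tg + 1 then c ⟨k, h⟩ else 0) • sb.R k) (cc.tg + 1)]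
  exact (Finset.sum_congr rfl fun i _ => by rw [dif_pos i.isLt]).symm

include sb in
lemma tbg_le_tb : cc.tbg ≤ cc.tb + 1 := by
  refine card_bound cc.tb cc.tbg sb.L sb.D
    (Submodule.span ℝ {M | ∃ h, 1 ≤ h ∧ h ≤ cc.tbg ∧ M = cc.N h}) ?_ ?_ ?_ ?_ ?_
    sb.L_mul_L (L_symm cc sb) sb.L_sum sb.D_indep
  · intro r hr
    exact D_mem_spanN cc sb r (by have := cc.tbg_pos; omega)
  · intro r hr A hA
    exact spanX_mul_spanN cc _ (L_mem_spanX cc sb r hr) A hA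
  · exact spanN_comm cc
  · exact spanN_comm' cc
  · intro A hA B hB
    exact mem_span_L cc sb (spanN_mul_t_mem_spanX cc A hA B hB)

include sb in
lemma tbg_le_tg : cc.tbg ≤ cc.tg + 1 := by
  refine card_bound cc.tg cc.tbg sb.R (fun r => (sb.D r)ᵀ)
    (Submodule.span ℝ {M | ∃ h, 1 ≤ h ∧ h ≤ cc.tbg ∧ M = (cc.N h)ᵀ}) ?_ ?_ ?_ ?_ ?_
    sb.R_mul_R (R_symm cc sb) sb.R_sum ?_
  · intro r hr
    exact mem_spanNT_of cc _ (D_mem_spanN cc sb r (by have := cc.tbg_pos; omega))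
  · intro r hr A hA
    have h1 := mem_spanN_of cc A hA
    have h2 := spanN_mul_spanY cc _ h1 _ (R_mem_spanY cc sb r hr)
    have h3 := mem_spanNT_of cc _ h2
    rwa [transpose_mul, transpose_transpose, R_symm cc sb r hr] at h3
  · intro A hA B hB
    have h1 := spanN_comm' cc _ (mem_spanN_of cc A hA) _ (mem_spanN_of cc B hB)
    rwa [transpose_transpose] at h1
  · intro A hA B hB
    have h1 := spanN_comm cc _ (mem_spanN_of cc A hA) _ (mem_spanN_of cc B hB)
    rwa [transpose_transpose] at h1
  · intro A hA B hB
    have h0 := spanN_t_mul_mem_spanY cc _ (mem_spanN_of cc A hA) _ (mem_spanN_of cc B hB)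
    rw [transpose_transpose] at h0
    exact mem_span_R cc sb h0
  · have h1 := sb.D_indep.map' (Matrix.transposeLinearEquiv β γ ℝ ℝ).toLinearMap
      (LinearMap.ker_eq_bot_of_injective (Matrix.transposeLinearEquiv β γ ℝ ℝ).injective)
    exact h1

end Config2

section Proj
variable {β γ : Type} [Fintype β] [DecidableEq β] [Fintype γ] [DecidableEq γ]

lemma proj_trace {n : Type} [Fintype n] (tb : ℕ) (L : ℕ → Matrix n n ℝ)
    (hLL : ∀ r, r ≤ tb → ∀ s, s ≤ tb → L r * L s = if r = s then L r else 0)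
    (P : Matrix n n ℝ) (cinv : ℝ) (co : ℕ → ℝ)
    (hP : P = cinv • ∑ s ∈ Finset.range (tb + 1), co s • L s) (h : ℕ) (hh : h ≤ tb) :
    trace (P * L h) = cinv * co h * trace (L h) := by
  have e : (∑ s ∈ Finset.range (tb + 1), co s • L s) * L h = co h • L h := by
    rw [Matrix.sum_mul, Finset.sum_eq_single h]
    · rw [Matrix.smul_mul, hLL h hh h hh, if_pos rfl]
    · intro s hs hne
      rw [Matrix.smul_mul, hLL s (Nat.lt_succ_iff.mp (Finset.mem_range.mp hs)) h hh,
        if_neg hne, smul_zero]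
    · intro habs; exact absurd (Finset.mem_range.mpr (Nat.lt_succ_of_le hh)) habs
  rw [hP, Matrix.smul_mul, e, trace_smul, trace_smul, smul_eq_mul, smul_eq_mul]
  ring

lemma projD_trace (tbg : ℕ) (Dm : ℕ → Matrix β γ ℝ) (h : ℕ) (hh : h < tbg)
    (tr0 : ∀ h', h' < tbg → h' ≠ h → trace (Dm h' * (Dm h)ᵀ) = 0)
    (P : Matrix β γ ℝ) (cinv : ℝ) (co : ℕ → ℝ)
    (hP : P = cinv • ∑ s ∈ Finset.range tbg, co s • Dm s) :
    trace (P * (Dm h)ᵀ) = cinv * co h * trace (Dm h * (Dm h)ᵀ) := by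
  rw [hP, Matrix.smul_mul, Matrix.sum_mul, trace_smul, Matrix.trace_sum, smul_eq_mul]
  have e : ∀ s ∈ Finset.range tbg, trace ((co s • Dm s) * (Dm h)ᵀ)
      = co s * trace (Dm s * (Dm h)ᵀ) := by
    intro s _
    rw [Matrix.smul_mul, trace_smul, smul_eq_mul]
  rw [Finset.sum_congr rfl e, Finset.sum_eq_single h]
  · ring
  · intro s hs hne
    rw [tr0 s (Finset.mem_range.mp hs) hne, mul_zero]
  · intro habs; exact absurd (Finset.mem_range.mpr hh) habs

end Proj


/-- the Krein conditions for bipartite coherent configurations: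
`λ i j h ≥ 0`, `ρ i j h ≥ 0`, and `λ i j h * ρ i j h ≥ (Δ i j h)²`. -/
theorem bipartiteCC_krein_conditions (β γ : Type) [Fintype β] [DecidableEq β]
    [Nonempty β] [Fintype γ] [DecidableEq γ] [Nonempty γ]
    (cc : BipartiteCC β γ) (sb : SecondBasis cc)
    (lam Del rho : ℕ → ℕ → ℕ → ℝ)
    (hlam : ∀ i, i ≤ cc.tb → ∀ j, j ≤ cc.tb →
      Matrix.hadamard (sb.L i) (sb.L j) =
        ((Fintype.card β : ℝ))⁻¹ • ∑ h ∈ Finset.range (cc.tb + 1), lam i j h • sb.L h)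
    (hDel : ∀ i, i ≤ cc.tbg - 1 → ∀ j, j ≤ cc.tbg - 1 →
      Matrix.hadamard (sb.D i) (sb.D j) =
        (Real.sqrt ((Fintype.card β : ℝ) * (Fintype.card γ : ℝ)))⁻¹ •
          ∑ h ∈ Finset.range cc.tbg, Del i j h • sb.D h)
    (hrho : ∀ i, i ≤ cc.tg → ∀ j, j ≤ cc.tg →
      Matrix.hadamard (sb.R i) (sb.R j) =
        ((Fintype.card γ : ℝ))⁻¹ • ∑ h ∈ Finset.range (cc.tg + 1), rho i j h • sb.R h) :
    (∀ i, i ≤ cc.tb → ∀ j, j ≤ cc.tb → ∀ h, h ≤ cc.tb → 0 ≤ lam i j h) ∧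
    (∀ i, i ≤ cc.tg → ∀ j, j ≤ cc.tg → ∀ h, h ≤ cc.tg → 0 ≤ rho i j h) ∧
    (∀ i, i ≤ cc.tbg - 1 → ∀ j, j ≤ cc.tbg - 1 → ∀ h, h ≤ cc.tbg - 1 →
      (Del i j h) ^ 2 ≤ lam i j h * rho i j h) := by
  have hb : (0:ℝ) < (Fintype.card β : ℝ) := by
    exact_mod_cast Fintype.card_pos
  have hg : (0:ℝ) < (Fintype.card γ : ℝ) := by
    exact_mod_cast Fintype.card_pos
  have htb := tbg_le_tb cc sb
  have htg := tbg_le_tg cc sb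
  have htbg1 := cc.tbg_pos
  have hLidem : ∀ h, h ≤ cc.tb → sb.L h * (sb.L h)ᵀ = sb.L h := by
    intro h hh
    rw [L_symm cc sb h hh, sb.L_mul_L h hh h hh, if_pos rfl]
  have hRidem : ∀ h, h ≤ cc.tg → sb.R h * (sb.R h)ᵀ = sb.R h := by
    intro h hh
    rw [R_symm cc sb h hh, sb.R_mul_R h hh h hh, if_pos rfl]
  have hLtr : ∀ h, h ≤ cc.tb → 0 < trace (sb.L h) := by
    intro h hh
    have hne : sb.L h ≠ 0 := sb.L_indep.ne_zero ⟨h, Nat.lt_succ_of_le hh⟩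
    have := trace_mul_transpose_self_pos (sb.L h) hne
    rwa [hLidem h hh] at this
  have hRtr : ∀ h, h ≤ cc.tg → 0 < trace (sb.R h) := by
    intro h hh
    have hne : sb.R h ≠ 0 := sb.R_indep.ne_zero ⟨h, Nat.lt_succ_of_le hh⟩
    have := trace_mul_transpose_self_pos (sb.R h) hne
    rwa [hRidem h hh] at this
  have hlam0 : ∀ i, i ≤ cc.tb → ∀ j, j ≤ cc.tb → ∀ h, h ≤ cc.tb → 0 ≤ lam i j h := by
    intro i hi j hj h hh
    have ha : trace (Matrix.hadamard (sb.L i) (sb.L j) * sb.L h)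
        = (Fintype.card β : ℝ)⁻¹ * lam i j h * trace (sb.L h) :=
      proj_trace cc.tb sb.L sb.L_mul_L _ _ _ (hlam i hi j hj) h hh
    have ha0 : 0 ≤ trace (Matrix.hadamard (sb.L i) (sb.L j) * sb.L h) := by
      have e : Matrix.hadamard (sb.L i) (sb.L j) * sb.L h
          = Matrix.hadamard (sb.L i * (sb.L i)ᵀ) (sb.L j * (sb.L j)ᵀ)
            * (sb.L h * (sb.L h)ᵀ) := by
        rw [hLidem i hi, hLidem j hj, hLidem h hh]
      rw [e]
      exact sos_trace_nonneg _ _ _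
    have htr := hLtr h hh
    by_contra hneg
    push_neg at hneg
    have hlt : trace (Matrix.hadamard (sb.L i) (sb.L j) * sb.L h) < 0 := by
      rw [ha]
      have := mul_pos (inv_pos.mpr hb) htr
      nlinarith
    linarith
  have hrho0 : ∀ i, i ≤ cc.tg → ∀ j, j ≤ cc.tg → ∀ h, h ≤ cc.tg → 0 ≤ rho i j h := by
    intro i hi j hj h hh
    have ha : trace (Matrix.hadamard (sb.R i) (sb.R j) * sb.R h)
        = (Fintype.card γ : ℝ)⁻¹ * rho i j h * trace (sb.R h) :=
      proj_trace cc.tg sb.R sb.R_mul_R _ _ _ (hrho i hi j hj) h hh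
    have ha0 : 0 ≤ trace (Matrix.hadamard (sb.R i) (sb.R j) * sb.R h) := by
      have e : Matrix.hadamard (sb.R i) (sb.R j) * sb.R h
          = Matrix.hadamard (sb.R i * (sb.R i)ᵀ) (sb.R j * (sb.R j)ᵀ)
            * (sb.R h * (sb.R h)ᵀ) := by
        rw [hRidem i hi, hRidem j hj, hRidem h hh]
      rw [e]
      exact sos_trace_nonneg _ _ _
    have htr := hRtr h hh
    by_contra hneg
    push_neg at hneg
    have hlt : trace (Matrix.hadamard (sb.R i) (sb.R j) * sb.R h) < 0 := by
      rw [ha]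
      have := mul_pos (inv_pos.mpr hg) htr
      nlinarith
    linarith
  refine ⟨hlam0, hrho0, ?_⟩
  intro i hi j hj h hh
  have hib : i ≤ cc.tb := by omega
  have hjb : j ≤ cc.tb := by omega
  have hhb : h ≤ cc.tb := by omega
  have hig : i ≤ cc.tg := by omega
  have hjg : j ≤ cc.tg := by omega
  have hhg : h ≤ cc.tg := by omega
  -- D_r * R_r = D_r
  have hDR : ∀ r, r ≤ cc.tbg - 1 → sb.D r * ((sb.D r)ᵀ * sb.D r) = sb.D r := by
    intro r hr
    have hrb : r ≤ cc.tb := by omega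
    have hrg : r ≤ cc.tg := by omega
    have hRs : (sb.R r)ᵀ = sb.R r := R_symm cc sb r hrg
    have hRR : sb.R r * sb.R r = sb.R r := by rw [sb.R_mul_R r hrg r hrg, if_pos rfl]
    have hLL2 : sb.L r * sb.L r = sb.L r := by rw [sb.L_mul_L r hrb r hrb, if_pos rfl]
    have f2 : sb.D r * sb.R r * (sb.D r)ᵀ = sb.L r := by
      rw [sb.R_eq_DtD r hr]
      have e : sb.D r * ((sb.D r)ᵀ * sb.D r) * (sb.D r)ᵀ
          = (sb.D r * (sb.D r)ᵀ) * (sb.D r * (sb.D r)ᵀ) := by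
        simp only [Matrix.mul_assoc]
      rw [e, ← sb.L_eq_DDt r hr, hLL2]
    have key : (sb.D r * sb.R r - sb.D r) * (sb.D r * sb.R r - sb.D r)ᵀ = 0 := by
      rw [transpose_sub, transpose_mul, hRs, Matrix.sub_mul, Matrix.mul_sub, Matrix.mul_sub]
      have f1 : sb.D r * sb.R r * (sb.R r * (sb.D r)ᵀ) = sb.L r := by
        rw [← Matrix.mul_assoc, Matrix.mul_assoc (sb.D r) (sb.R r) (sb.R r), hRR, f2]
      have f3 : sb.D r * (sb.R r * (sb.D r)ᵀ) = sb.L r := by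
        rw [← Matrix.mul_assoc, f2]
      have f4 : sb.D r * (sb.D r)ᵀ = sb.L r := (sb.L_eq_DDt r hr).symm
      rw [f1, f2, f3, f4]
      simp
    have hz : sb.D r * sb.R r - sb.D r = 0 := by
      apply eq_zero_of_trace_mul_transpose_self
      rw [key, trace_zero]
    have := sub_eq_zero.mp hz
    rwa [sb.R_eq_DtD r hr] at this
  -- orthogonality of the D's
  have horth : ∀ h', h' < cc.tbg → h' ≠ h → trace (sb.D h' * (sb.D h)ᵀ) = 0 := by
    intro h' hbnd hne
    have hh' : h' ≤ cc.tbg - 1 := by omega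
    have hh'b : h' ≤ cc.tb := by omega
    have hM : (sb.D h')ᵀ * sb.D h = 0 := by
      apply eq_zero_of_trace_mul_transpose_self
      have e1 : ((sb.D h')ᵀ * sb.D h) * ((sb.D h')ᵀ * sb.D h)ᵀ
          = (sb.D h')ᵀ * (sb.D h * (sb.D h)ᵀ * sb.D h') := by
        rw [transpose_mul, transpose_transpose]
        simp only [Matrix.mul_assoc]
      rw [e1, trace_mul_comm]
      have e2 : sb.D h * (sb.D h)ᵀ * sb.D h' * (sb.D h')ᵀ = sb.L h * sb.L h' := by
        rw [← sb.L_eq_DDt h hh, Matrix.mul_assoc, ← sb.L_eq_DDt h' hh']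
      rw [e2, sb.L_mul_L h hhb h' hh'b, if_neg (Ne.symm hne), trace_zero]
    rw [trace_mul_comm]
    have e3 : (sb.D h)ᵀ * sb.D h' = ((sb.D h')ᵀ * sb.D h)ᵀ := by
      rw [transpose_mul, transpose_transpose]
    rw [e3, hM, transpose_zero, trace_zero]
  -- block identities
  have hGblock : ∀ r, r ≤ cc.tbg - 1 →
      (fromRows (sb.D r) ((sb.D r)ᵀ * sb.D r)) * (fromRows (sb.D r) ((sb.D r)ᵀ * sb.D r))ᵀ
        = fromBlocks (sb.L r) (sb.D r) ((sb.D r)ᵀ) (sb.R r) := by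
    intro r hr
    have hrg : r ≤ cc.tg := by omega
    rw [transpose_fromRows, fromRows_mul_fromCols]
    have e1 : sb.D r * (sb.D r)ᵀ = sb.L r := (sb.L_eq_DDt r hr).symm
    have e2 : sb.D r * ((sb.D r)ᵀ * sb.D r)ᵀ = sb.D r := by
      rw [transpose_mul, transpose_transpose]
      exact hDR r hr
    have e3 : ((sb.D r)ᵀ * sb.D r) * (sb.D r)ᵀ = (sb.D r)ᵀ := by
      have h' := congrArg Matrix.transpose (hDR r hr)
      rwa [transpose_mul, transpose_mul, transpose_transpose] at h'
    have e4 : ((sb.D r)ᵀ * sb.D r) * ((sb.D r)ᵀ * sb.D r)ᵀ = sb.R r := by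
      rw [transpose_mul, transpose_transpose, ← sb.R_eq_DtD r hr,
        sb.R_mul_R r hrg r hrg, if_pos rfl]
    rw [e1, e2, e3, e4]
  have hKblock : ∀ x : ℝ,
      (fromRows (x • sb.D h) ((sb.D h)ᵀ * sb.D h))
        * (fromRows (x • sb.D h) ((sb.D h)ᵀ * sb.D h))ᵀ
      = fromBlocks ((x*x) • sb.L h) (x • sb.D h) (x • (sb.D h)ᵀ) (sb.R h) := by
    intro x
    rw [transpose_fromRows, fromRows_mul_fromCols, transpose_smul]
    have k1 : (x • sb.D h) * (x • (sb.D h)ᵀ) = (x*x) • sb.L h := by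
      rw [Matrix.smul_mul, Matrix.mul_smul, smul_smul, ← sb.L_eq_DDt h hh]
    have k2 : (x • sb.D h) * ((sb.D h)ᵀ * sb.D h)ᵀ = x • sb.D h := by
      rw [Matrix.smul_mul, transpose_mul, transpose_transpose, hDR h hh]
    have k3 : ((sb.D h)ᵀ * sb.D h) * (x • (sb.D h)ᵀ) = x • (sb.D h)ᵀ := by
      rw [Matrix.mul_smul]
      have h' := congrArg Matrix.transpose (hDR h hh)
      rw [transpose_mul, transpose_mul, transpose_transpose] at h'
      rw [h']
    have k4 : ((sb.D h)ᵀ * sb.D h) * ((sb.D h)ᵀ * sb.D h)ᵀ = sb.R h := by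
      rw [transpose_mul, transpose_transpose, ← sb.R_eq_DtD h hh,
        sb.R_mul_R h hhg h hhg, if_pos rfl]
    rw [k1, k2, k3, k4]
  -- the quadratic form
  have hQ : ∀ x : ℝ, 0 ≤ trace (Matrix.hadamard (sb.L i) (sb.L j) * sb.L h) * (x*x)
      + (2 * trace (Matrix.hadamard (sb.D i) (sb.D j) * (sb.D h)ᵀ)) * x
      + trace (Matrix.hadamard (sb.R i) (sb.R j) * sb.R h) := by
    intro x
    have h0 := sos_trace_nonneg (fromRows (sb.D i) ((sb.D i)ᵀ * sb.D i))
      (fromRows (sb.D j) ((sb.D j)ᵀ * sb.D j))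
      (fromRows (x • sb.D h) ((sb.D h)ᵀ * sb.D h))
    rw [hGblock i hi, hGblock j hj, hKblock x, hadamard_fromBlocks, fromBlocks_multiply,
      trace_fromBlocks'] at h0
    rw [trace_add, trace_add, Matrix.mul_smul, Matrix.mul_smul, Matrix.mul_smul,
      trace_smul, trace_smul, trace_smul] at h0
    have hd2 : trace (Matrix.hadamard (sb.D i)ᵀ (sb.D j)ᵀ * sb.D h)
        = trace (Matrix.hadamard (sb.D i) (sb.D j) * (sb.D h)ᵀ) := by
      rw [hadamard_transpose', trace_mul_comm]
      rw [show sb.D h * (Matrix.hadamard (sb.D i) (sb.D j))ᵀ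
          = (Matrix.hadamard (sb.D i) (sb.D j) * (sb.D h)ᵀ)ᵀ by
        rw [transpose_mul, transpose_transpose]]
      rw [trace_transpose]
    rw [hd2] at h0
    simp only [smul_eq_mul] at h0
    nlinarith [h0]
  have hdisc := discrim_le_zero hQ
  rw [discrim] at hdisc
  -- extraction of the Krein parameters
  have haval : trace (Matrix.hadamard (sb.L i) (sb.L j) * sb.L h)
      = (Fintype.card β : ℝ)⁻¹ * lam i j h * trace (sb.L h) :=
    proj_trace cc.tb sb.L sb.L_mul_L _ _ _ (hlam i hib j hjb) h hhb
  have hcval : trace (Matrix.hadamard (sb.R i) (sb.R j) * sb.R h)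
      = (Fintype.card γ : ℝ)⁻¹ * rho i j h * trace (sb.R h) :=
    proj_trace cc.tg sb.R sb.R_mul_R _ _ _ (hrho i hig j hjg) h hhg
  have hdval : trace (Matrix.hadamard (sb.D i) (sb.D j) * (sb.D h)ᵀ)
      = (Real.sqrt ((Fintype.card β : ℝ) * (Fintype.card γ : ℝ)))⁻¹ * Del i j h
        * trace (sb.D h * (sb.D h)ᵀ) :=
    projD_trace cc.tbg sb.D h (by omega) horth _ _ _ (hDel i hi j hj)
  have htrR : trace (sb.R h) = trace (sb.L h) := by
    rw [sb.R_eq_DtD h hh, sb.L_eq_DDt h hh, trace_mul_comm]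
  have htrD : trace (sb.D h * (sb.D h)ᵀ) = trace (sb.L h) := by
    rw [← sb.L_eq_DDt h hh]
  have ht : 0 < trace (sb.L h) := hLtr h hhb
  have hbg : (0:ℝ) < (Fintype.card β : ℝ) * (Fintype.card γ : ℝ) := mul_pos hb hg
  have hs2 : Real.sqrt ((Fintype.card β : ℝ) * (Fintype.card γ : ℝ)) ^ 2
      = (Fintype.card β : ℝ) * (Fintype.card γ : ℝ) := Real.sq_sqrt hbg.le
  have hd2ac : trace (Matrix.hadamard (sb.D i) (sb.D j) * (sb.D h)ᵀ) ^ 2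
      ≤ trace (Matrix.hadamard (sb.L i) (sb.L j) * sb.L h)
        * trace (Matrix.hadamard (sb.R i) (sb.R j) * sb.R h) := by
    nlinarith [hdisc]
  have e1 : trace (Matrix.hadamard (sb.D i) (sb.D j) * (sb.D h)ᵀ) ^ 2
      = Del i j h ^ 2 * (trace (sb.L h) ^ 2
          * ((Fintype.card β : ℝ) * (Fintype.card γ : ℝ))⁻¹) := by
    rw [hdval, htrD]
    rw [mul_pow, mul_pow, inv_pow, hs2]
    ring
  have e2 : trace (Matrix.hadamard (sb.L i) (sb.L j) * sb.L h)
      * trace (Matrix.hadamard (sb.R i) (sb.R j) * sb.R h)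
      = lam i j h * rho i j h * (trace (sb.L h) ^ 2
          * ((Fintype.card β : ℝ) * (Fintype.card γ : ℝ))⁻¹) := by
    rw [haval, hcval, htrR, mul_inv]
    ring
  rw [e1, e2] at hd2ac
  have hpos : 0 < trace (sb.L h) ^ 2 * ((Fintype.card β : ℝ) * (Fintype.card γ : ℝ))⁻¹ := by
    have := ht.ne'
    positivity
  exact le_of_mul_le_mul_right hd2ac hpos
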